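/- Fix β > 1. A word w ∈ Σ_n(β) gives a full cylinder (i.e., the cylinder I(w) = {x ∈ [0,1) : the β-expansion of x starts with w} has length exactly β^{-n}) if and only if for every m ≥ 1 and every admissible word v ∈ Σ_m(β), the concatenation wv is admissible, i.e., wv ∈ Σ_{n+m}(β). -/

import Mathlib

open MeasureTheory Set
open scoped Classical

/-- The beta-transformation `T_β x = βx - ⌊βx⌋`. -/
noncomputable def betaT (β x : ℝ) : ℝ := Int.fract (β * x)

/-- The `k`-th digit (0-indexed) of the β-expansion of `x`: `ε_{k+1}(x,β) = ⌊β T_β^k x⌋`. -/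
noncomputable def betaDigit (β x : ℝ) (k : ℕ) : ℕ := ⌊β * (betaT β)^[k] x⌋₊

/-- `Σ_n(β)`: admissible words of length `n`, i.e. prefixes of β-expansions of points of `[0,1)`. -/
def admWords (β : ℝ) (n : ℕ) : Set (Fin n → ℕ) :=
  {w | ∃ x ∈ Set.Ico (0:ℝ) 1, ∀ i : Fin n, w i = betaDigit β x i}

/-- The cylinder `𝔍(w)` of points of `[0,1)` whose β-expansion starts with `w`. -/
def cyl (β : ℝ) {n : ℕ} (w : Fin n → ℕ) : Set ℝ :=
  {x | x ∈ Set.Ico (0:ℝ) 1 ∧ ∀ i : Fin n, betaDigit β x i = w i}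

/-- `Ξ_n(β)`: admissible words of length `n` whose cylinder is full (of length `β^{-n}`). -/
def fullWords (β : ℝ) (n : ℕ) : Set (Fin n → ℕ) :=
  {w | w ∈ admWords β n ∧ volume (cyl β w) = ENNReal.ofReal (1 / β ^ n)}

/-- `ε(β)`: the β-expansion of 1 (0-indexed). -/
noncomputable def eps1 (β : ℝ) (k : ℕ) : ℕ := betaDigit β 1 k

/-- `ε*(β)`: the infinite β-expansion of 1.  If `ε(β)` has a last nonzero digit at
(0-indexed) position `N`, it is the periodic sequence `(ε_0 ⋯ ε_{N-1} (ε_N - 1))^∞`;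
otherwise it is `ε(β)` itself. -/

noncomputable def epsStar (β : ℝ) : ℕ → ℕ :=
  if h : ∃ N, eps1 β N ≠ 0 ∧ ∀ k, N < k → eps1 β k = 0 then
    fun k => if k % (h.choose + 1) = h.choose then eps1 β h.choose - 1
             else eps1 β (k % (h.choose + 1))
  else eps1 β

/-- Strict lexicographic order on sequences of nonnegative integers. -/
def lexLt (a b : ℕ → ℕ) : Prop := ∃ i, (∀ j, j < i → a j = b j) ∧ a i < b i

/-- Strict lexicographic order on words of length `n`. -/
def wordLt {n : ℕ} (a b : Fin n → ℕ) : Prop :=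
  ∃ i : Fin n, (∀ j, j < i → a j = b j) ∧ a i < b i

/-- `Ω_n(x)`: all length-`n` prefixes of β-expansions of `x` over all bases `β > 1`. -/
def prefWords (x : ℝ) (n : ℕ) : Set (Fin n → ℕ) :=
  {w | ∃ β : ℝ, 1 < β ∧ ∀ i : Fin n, w i = betaDigit β x i}

/-- The parameter cylinder `I(w) = {β > 1 : ε_1(x,β)⋯ε_n(x,β) = w}`. -/
def pcyl (x : ℝ) {n : ℕ} (w : Fin n → ℕ) : Set ℝ :=
  {β | 1 < β ∧ ∀ i : Fin n, betaDigit β x i = w i}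

/-- `Λ_n(x)`: words whose parameter cylinder is full, i.e. `{T_β^n x : β ∈ I(w)} = [0,1)`. -/
def pfull (x : ℝ) (n : ℕ) : Set (Fin n → ℕ) :=
  {w | w ∈ prefWords x n ∧ (fun β => (betaT β)^[n] x) '' pcyl x w = Set.Ico (0:ℝ) 1}

noncomputable def pv (β : ℝ) (a : ℕ → ℕ) : ℕ → ℝ
  | 0 => 0
  | k+1 => β * pv β a k + a k

lemma pv_succ (β : ℝ) (a : ℕ → ℕ) (k : ℕ) : pv β a (k+1) = β * pv β a k + a k := rfl

lemma pv_nonneg {β : ℝ} (hβ : 0 < β) (a : ℕ → ℕ) (k : ℕ) : 0 ≤ pv β a k := by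
  induction k with
  | zero => simp [pv]
  | succ k ih => rw [pv_succ]; have := (a k).cast_nonneg (α := ℝ); nlinarith

lemma betaT_mem (β x : ℝ) : betaT β x ∈ Set.Ico (0:ℝ) 1 :=
  ⟨Int.fract_nonneg _, Int.fract_lt_one _⟩

lemma iter_mem (β : ℝ) {x : ℝ} (hx : x ∈ Set.Ico (0:ℝ) 1) (k : ℕ) :
    (betaT β)^[k] x ∈ Set.Ico (0:ℝ) 1 := by
  induction k with
  | zero => simpa
  | succ k ih => rw [Function.iterate_succ_apply']; exact betaT_mem β _

lemma iter_eq {β : ℝ} (hβ : 1 < β) (a : ℕ → ℕ) {x : ℝ} (hx : x ∈ Set.Ico (0:ℝ) 1)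
    (k : ℕ) (hd : ∀ j < k, betaDigit β x j = a j) :
    (betaT β)^[k] x = β ^ k * x - pv β a k := by
  induction k with
  | zero => simp [pv]
  | succ k ih =>
    have hik := ih (fun j hj => hd j (hj.trans (Nat.lt_succ_self k)))
    have ht : (betaT β)^[k] x ∈ Set.Ico (0:ℝ) 1 := iter_mem β hx k
    have hb0 : (0:ℝ) ≤ β * (betaT β)^[k] x := mul_nonneg (by linarith) ht.1
    have hfl : ⌊β * (betaT β)^[k] x⌋₊ = a k := hd k (Nat.lt_succ_self k)
    have hfl' := (Nat.floor_eq_iff hb0).mp hfl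
    have hfl2 : ⌊β * (betaT β)^[k] x⌋ = (a k : ℤ) := by
      rw [Int.floor_eq_iff]
      exact ⟨by exact_mod_cast hfl'.1, by push_cast; exact hfl'.2⟩
    rw [Function.iterate_succ_apply', betaT, Int.fract, hfl2, hik, pv_succ]
    push_cast
    ring

lemma bounds_of_digits {β : ℝ} (hβ : 1 < β) (a : ℕ → ℕ) {x : ℝ}
    (hx : x ∈ Set.Ico (0:ℝ) 1) (k : ℕ) (hd : ∀ j < k, betaDigit β x j = a j) :
    ∀ j < k, pv β a (j+1) ≤ β^(j+1) * x ∧ β^(j+1) * x < pv β a (j+1) + 1 := by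
  intro j hj
  have hik : (betaT β)^[j] x = β^j * x - pv β a j :=
    iter_eq hβ a hx j (fun i hi => hd i (hi.trans hj))
  have ht := iter_mem β hx j
  have hb0 : (0:ℝ) ≤ β * (betaT β)^[j] x := mul_nonneg (by linarith) ht.1
  have hfl := (Nat.floor_eq_iff hb0).mp (hd j hj)
  have h1 : β * ((betaT β)^[j] x) = β^(j+1)*x - β * pv β a j := by rw [hik]; ring
  rw [pv_succ]
  exact ⟨by linarith [hfl.1], by linarith [hfl.2]⟩

lemma digits_of_bounds {β : ℝ} (hβ : 1 < β) (a : ℕ → ℕ) {x : ℝ}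
    (hx : x ∈ Set.Ico (0:ℝ) 1) (k : ℕ)
    (hb : ∀ j < k, pv β a (j+1) ≤ β^(j+1) * x ∧ β^(j+1) * x < pv β a (j+1) + 1) :
    ∀ j < k, betaDigit β x j = a j := by
  induction k with
  | zero => intro j hj; exact absurd hj (Nat.not_lt_zero j)
  | succ k ih =>
    have ihd := ih (fun j hj => hb j (hj.trans (Nat.lt_succ_self k)))
    intro j hj
    rcases Nat.lt_or_ge j k with h | h
    · exact ihd j h
    · have hjk : j = k := le_antisymm (Nat.lt_succ_iff.mp hj) h
      subst hjk
      have hik : (betaT β)^[j] x = β^j*x - pv β a j := iter_eq hβ a hx j ihd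
      have ht := iter_mem β hx j
      have hb0 : (0:ℝ) ≤ β * (betaT β)^[j] x := mul_nonneg (by linarith) ht.1
      have hbj := hb j (Nat.lt_succ_self j)
      rw [pv_succ] at hbj
      rw [betaDigit, Nat.floor_eq_iff hb0]
      have h1 : β * ((betaT β)^[j] x) = β^(j+1)*x - β*pv β a j := by rw [hik]; ring
      exact ⟨by linarith [hbj.1], by linarith [hbj.2]⟩

lemma pv_div_mono {β : ℝ} (hβ : 1 < β) (a : ℕ → ℕ) :
    Monotone (fun j => pv β a j / β ^ j) := by
  have hβ0 : (0:ℝ) < β := lt_trans one_pos hβ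
  apply monotone_nat_of_le_succ
  intro j
  have h1 : (0:ℝ) < β ^ j := pow_pos hβ0 j
  have h2 : (0:ℝ) < β ^ (j+1) := pow_pos hβ0 (j+1)
  rw [div_le_div_iff₀ h1 h2, pv_succ, pow_succ]
  have := (a j).cast_nonneg (α := ℝ)
  nlinarith

theorem full_iff_concat_admissible (β : ℝ) (hβ : 1 < β) (n : ℕ) (w : Fin n → ℕ)
    (hw : w ∈ admWords β n) :
    volume (cyl β w) = ENNReal.ofReal (1 / β ^ n) ↔
      ∀ m : ℕ, 1 ≤ m → ∀ v ∈ admWords β m, Fin.append w v ∈ admWords β (n + m) := by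
  have hβ0 : (0:ℝ) < β := lt_trans one_pos hβ
  set a : ℕ → ℕ := fun k => if h : k < n then w ⟨k, h⟩ else 0 with ha
  have hpow : (0:ℝ) < β ^ n := pow_pos hβ0 n
  set L : ℝ := pv β a n / β ^ n with hL
  have hL0 : 0 ≤ L := div_nonneg (pv_nonneg hβ0 a n) hpow.le
  have hdig_iff : ∀ x : ℝ, (∀ i : Fin n, betaDigit β x i = w i) ↔
      (∀ j < n, betaDigit β x j = a j) := by
    intro x
    constructor
    · intro h j hj
      have := h ⟨j, hj⟩
      simp only [ha, hj, dif_pos]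
      exact this
    · intro h i
      have := h i i.isLt
      simpa [ha, i.isLt] using this
  have hcylL : ∀ x ∈ cyl β w, L ≤ x ∧ x < L + 1/β^n := by
    intro x hx
    have hd := (hdig_iff x).mp hx.2
    have hit : (betaT β)^[n] x = β^n * x - pv β a n := iter_eq hβ a hx.1 n hd
    have hm := iter_mem β hx.1 n
    rw [hit] at hm
    constructor
    · rw [hL, div_le_iff₀ hpow]; nlinarith [hm.1]
    · rw [hL]
      have h2 : x < (pv β a n + 1) / β ^ n := by rw [lt_div_iff₀ hpow]; nlinarith [hm.2]
      have h3 : (pv β a n + 1) / β ^ n = pv β a n / β^n + 1/β^n := by ring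
      linarith
  have hcyl_iff : ∀ x : ℝ, x ∈ cyl β w ↔
      (L ≤ x ∧ (x < 1 ∧ ∀ j < n, β^(j+1) * x < pv β a (j+1) + 1)) := by
    intro x
    constructor
    · intro hx
      refine ⟨(hcylL x hx).1, hx.1.2, fun j hj => ?_⟩
      exact (bounds_of_digits hβ a hx.1 n ((hdig_iff x).mp hx.2) j hj).2
    · rintro ⟨h1, h2, h3⟩
      have hx01 : x ∈ Set.Ico (0:ℝ) 1 := ⟨le_trans hL0 h1, h2⟩
      refine ⟨hx01, (hdig_iff x).mpr ?_⟩
      apply digits_of_bounds hβ a hx01 n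
      intro j hj
      refine ⟨?_, h3 j hj⟩
      have hmono := pv_div_mono hβ a (show j+1 ≤ n from hj)
      simp only at hmono
      have hp : (0:ℝ) < β^(j+1) := pow_pos hβ0 (j+1)
      rw [div_le_div_iff₀ hp hpow] at hmono
      -- pv a (j+1) * β^n ≤ pv a n * β^(j+1)
      rw [← hL] at *
      have hLx : pv β a n ≤ β^n * x := by
        rw [hL, div_le_iff₀ hpow] at h1
        linarith [h1]
      nlinarith [hmono, hLx, hp, hpow]
  have hne : (cyl β w).Nonempty := by
    obtain ⟨x0, hx0, hd⟩ := hw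
    exact ⟨x0, hx0, fun i => (hd i).symm⟩
  have hbdd : BddAbove (cyl β w) := ⟨L + 1/β^n, fun x hx => (hcylL x hx).2.le⟩
  set R := sSup (cyl β w) with hR
  have hRle : R ≤ L + 1/β^n := csSup_le hne (fun x hx => (hcylL x hx).2.le)
  have hlt_sup : ∀ x ∈ cyl β w, x < R := by
    intro x hx
    obtain ⟨h1, h2, h3⟩ := (hcyl_iff x).mp hx
    set U : Set ℝ := {t : ℝ | t < 1 ∧ ∀ j < n, β^(j+1)*t < pv β a (j+1)+1} with hUdef
    have hU : IsOpen U := by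
      have hUeq : U = Set.Iio 1 ∩ ⋂ j ∈ Finset.range n, {t : ℝ | β^(j+1)*t < pv β a (j+1)+1} := by
        ext t
        simp [hUdef, Set.mem_iInter]
      rw [hUeq]
      refine isOpen_Iio.inter (isOpen_biInter_finset fun j _ => ?_)
      exact isOpen_lt (continuous_const.mul continuous_id) continuous_const
    obtain ⟨ε, hε, hball⟩ := Metric.isOpen_iff.mp hU x ⟨h2, h3⟩
    have hx' : x + ε/2 ∈ U := by
      apply hball
      rw [Metric.mem_ball, Real.dist_eq]
      rw [abs_of_nonneg (by linarith)]
      linarith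
    have hmem : x + ε/2 ∈ cyl β w := (hcyl_iff _).mpr ⟨by linarith, hx'.1, hx'.2⟩
    calc x < x + ε/2 := by linarith
      _ ≤ R := le_csSup hbdd hmem
  have hIco : cyl β w = Set.Ico L R := by
    ext y
    constructor
    · intro hy; exact ⟨(hcylL y hy).1, hlt_sup y hy⟩
    · rintro ⟨h1, h2⟩
      obtain ⟨z, hz, hyz⟩ := exists_lt_of_lt_csSup hne h2
      obtain ⟨hz1, hz2, hz3⟩ := (hcyl_iff z).mp hz
      refine (hcyl_iff y).mpr ⟨h1, lt_trans hyz hz2, fun j hj => ?_⟩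
      have hp : (0:ℝ) < β^(j+1) := pow_pos hβ0 (j+1)
      calc β^(j+1) * y < β^(j+1) * z := by nlinarith
        _ < pv β a (j+1) + 1 := hz3 j hj
  have hLR : L < R := by
    obtain ⟨x0, hx0⟩ := hne
    rw [hIco] at hx0
    exact lt_of_le_of_lt hx0.1 hx0.2
  have hvol : volume (cyl β w) = ENNReal.ofReal (R - L) := by
    rw [hIco, Real.volume_Ico]
  constructor
  · intro hv m hm v hv'
    have hReq : R - L = 1/β^n := by
      rw [hvol] at hv
      exact (ENNReal.ofReal_eq_ofReal_iff (by linarith) (by positivity)).mp hv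
    obtain ⟨x, hx01, hvd⟩ := hv'
    set y := L + x/β^n with hy
    have hyIco : y ∈ Set.Ico L R := by
      constructor
      · rw [hy]; have : 0 ≤ x / β^n := div_nonneg hx01.1 hpow.le; linarith
      · have hxx : x / β^n < 1/β^n := div_lt_div_of_pos_right hx01.2 hpow
        rw [hy]; linarith
    have hyS : y ∈ cyl β w := by rw [hIco]; exact hyIco
    have hyd : ∀ j < n, betaDigit β y j = a j := (hdig_iff y).mp hyS.2
    have hTn : (betaT β)^[n] y = x := by
      rw [iter_eq hβ a hyS.1 n hyd, hy, hL]
      field_simp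
      ring
    refine ⟨y, hyS.1, fun i => ?_⟩
    by_cases hi : (i : ℕ) < n
    · have heq := Fin.append_left w v ⟨(i:ℕ), hi⟩
      rw [show Fin.castAdd m ⟨(i:ℕ), hi⟩ = i from Fin.ext rfl] at heq
      rw [heq]
      exact (hyS.2 ⟨(i:ℕ), hi⟩).symm
    · push_neg at hi
      have hj : (i:ℕ) - n < m := by omega
      have heq := Fin.append_right w v ⟨(i:ℕ)-n, hj⟩
      rw [show Fin.natAdd n ⟨(i:ℕ)-n, hj⟩ = i from Fin.ext (show n + ((i:ℕ)-n) = (i:ℕ) by omega)] at heq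
      rw [heq, hvd ⟨(i:ℕ)-n, hj⟩]
      have hit : (betaT β)^[(i:ℕ)] y = (betaT β)^[(i:ℕ)-n] x := by
        conv_lhs => rw [show (i:ℕ) = ((i:ℕ)-n) + n by omega]
        rw [Function.iterate_add_apply, hTn]
      show betaDigit β x ((i:ℕ)-n) = betaDigit β y (i:ℕ)
      unfold betaDigit
      rw [hit]
  · intro hcon
    rw [hvol]
    have hge : L + 1/β^n ≤ R := by
      by_contra hlt
      push_neg at hlt
      obtain ⟨ε, hε⟩ : ∃ ε : ℝ, ε = L + 1/β^n - R := ⟨_, rfl⟩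
      have hεpos : 0 < ε := by rw [hε]; linarith
      obtain ⟨δ, hδ⟩ : ∃ δ : ℝ, δ = ε * β^n / 2 := ⟨_, rfl⟩
      have hδpos : 0 < δ := by rw [hδ]; positivity
      obtain ⟨m₀, hm₀⟩ := exists_pow_lt_of_lt_one hδpos (show 1/β < 1 by rw [div_lt_one hβ0]; exact hβ)
      set m := m₀ + 1 with hm
      have hmδ : (1/β)^m ≤ δ :=
        le_trans (pow_le_pow_of_le_one (by positivity) (by rw [div_le_one hβ0]; exact hβ.le) (Nat.le_succ m₀)) hm₀.le
      obtain ⟨x, hxdef⟩ : ∃ x : ℝ, x = max 0 (1 - δ) := ⟨_, rfl⟩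
      have hx01 : x ∈ Set.Ico (0:ℝ) 1 := by
        rw [hxdef]; exact ⟨le_max_left _ _, max_lt one_pos (by linarith)⟩
      set v : Fin m → ℕ := fun i => betaDigit β x i with hv
      have hvadm : v ∈ admWords β m := ⟨x, hx01, fun i => rfl⟩
      obtain ⟨z, hz01, hzd⟩ := hcon m (Nat.le_add_left 1 m₀) v hvadm
      have hzdn : ∀ j < n, betaDigit β z j = a j := by
        intro j hj
        have h1 := hzd (Fin.castAdd m ⟨j, hj⟩)
        rw [Fin.append_left] at h1
        simp only [ha, hj, dif_pos]
        simpa using h1.symm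
      have hzcyl : z ∈ cyl β w := ⟨hz01, (hdig_iff z).mpr hzdn⟩
      have hzR : z ≤ R := le_csSup hbdd hzcyl
      have huz : (betaT β)^[n] z = β^n * z - pv β a n := iter_eq hβ a hz01 n hzdn
      set u := (betaT β)^[n] z with hudef
      have hu01 : u ∈ Set.Ico (0:ℝ) 1 := iter_mem β hz01 n
      set b : ℕ → ℕ := fun k => if h : k < m then v ⟨k, h⟩ else 0 with hb
      have hud : ∀ j < m, betaDigit β u j = b j := by
        intro j hj
        have h1 := hzd (Fin.natAdd n ⟨j, hj⟩)
        rw [Fin.append_right] at h1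
        have h2 : betaDigit β u j = betaDigit β z (n + j) := by
          unfold betaDigit
          rw [hudef, show n + j = j + n from Nat.add_comm n j, Function.iterate_add_apply]
        rw [h2]
        simp only [hb, hj, dif_pos]
        simpa using h1.symm
      have hxd : ∀ j < m, betaDigit β x j = b j := by
        intro j hj
        simp only [hb, hj, dif_pos, hv]
      have hTu := iter_eq hβ b hu01 m hud
      have hTx := iter_eq hβ b hx01 m hxd
      have hTu01 := iter_mem β hu01 m
      have hTx01 := iter_mem β hx01 m
      rw [hTu] at hTu01
      rw [hTx] at hTx01
      have hβm : (0:ℝ) < β^m := pow_pos hβ0 m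
      have hdiff : x - u < 1/β^m := by
        rw [lt_div_iff₀ hβm]
        nlinarith [hTu01.1, hTx01.2]
      have h1m : (1:ℝ)/β^m = (1/β)^m := by rw [div_pow, one_pow]
      have hxge : 1 - δ ≤ x := by rw [hxdef]; exact le_max_right _ _
      have hub : 1 - ε*β^n < u := by
        rw [h1m] at hdiff
        nlinarith [hmδ]
      have hzval : z = L + u / β^n := by
        rw [hL]
        field_simp
        linarith [huz]
      have hfin : R < z := by
        rw [hzval]
        have h3 : (1 - ε*β^n)/β^n < u/β^n := div_lt_div_of_pos_right hub hpow
        have h4 : (1 - ε*β^n)/β^n = 1/β^n - ε := by field_simp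
        linarith [h3, h4, hε]
      linarith
    have : R = L + 1/β^n := le_antisymm hRle hge
    rw [this]
    congr 1
    ring
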